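/- arXiv:1401.4560 — 5 statements merged into one kernel-verified Lean document; each statement's English description precedes it below -/
import Mathlib

section
/- For every integer n ≥ 1, the q-Bernoulli numbers satisfy the q-binomial recurrence Σ_{k=0}^{n} [n choose k]_q · ((−1;q)_{n−k}/2^{n−k}) · b_{k,q} − b_{n,q} = 1 if n = 1, and = 0 if n > 1. -/
open Finset PowerSeries

/-- The `q`-number `[n]_q = (1 - q^n)/(1 - q)`. -/
noncomputable def qNum (q : ℂ) (n : ℕ) : ℂ := (1 - q ^ n) / (1 - q)

/-- The `q`-factorial `[n]_q!`. -/
noncomputable def qFact (q : ℂ) : ℕ → ℂ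
  | 0 => 1
  | n + 1 => qNum q (n + 1) * qFact q n

/-- The `q`-shifted factorial `(a; q)_n = ∏_{j=0}^{n-1} (1 - q^j a)`. -/
noncomputable def qShift (a q : ℂ) (n : ℕ) : ℂ := ∏ j ∈ Finset.range n, (1 - q ^ j * a)

/-- The Gaussian binomial coefficient `[n choose k]_q = (q;q)_n / ((q;q)_{n-k} (q;q)_k)`. -/
noncomputable def qBinom (q : ℂ) (n k : ℕ) : ℂ :=
  qShift q q n / (qShift q q (n - k) * qShift q q k)

/-- The formal power series (in `t`) `𝓔_q(tx) = Σ_{n≥0} (-1;q)_n (x)^n t^n / (2^n [n]_q!)`. -/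
noncomputable def qExp (q x : ℂ) : PowerSeries ℂ :=
  PowerSeries.mk fun n => qShift (-1) q n * x ^ n / (2 ^ n * qFact q n)

/-- The generating series `Σ_{n≥0} a_n t^n / [n]_q!` of a sequence `a`. -/
noncomputable def qGen (q : ℂ) (a : ℕ → ℂ) : PowerSeries ℂ :=
  PowerSeries.mk fun n => a n / qFact q n

/-- The `q`-addition `(x ⊕_q y)^n`. -/
noncomputable def qAdd (q x y : ℂ) (n : ℕ) : ℂ :=
  ∑ k ∈ Finset.range (n + 1),
    qBinom q n k * (qShift (-1) q k * qShift (-1) q (n - k) / 2 ^ n) * x ^ k * y ^ (n - k)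

lemma aux_pow_ne_one {q : ℂ} (hq1 : ‖q‖ < 1) {j : ℕ} (hj : 1 ≤ j) :
    q ^ j ≠ 1 := by
  intro h
  have : ‖q ^ j‖ < 1 := by
    rw [norm_pow]
    exact lt_of_le_of_lt (pow_le_of_le_one (by positivity) hq1.le (by omega)) hq1
  rw [h] at this
  simp at this

lemma aux_qFact_ne_zero {q : ℂ} (hq1 : ‖q‖ < 1) (m : ℕ) : qFact q m ≠ 0 := by
  induction m with
  | zero => simp [qFact]
  | succ k ih =>
      have h1q : (1 : ℂ) - q ≠ 0 := by
        refine sub_ne_zero.mpr ?_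
        intro h
        exact aux_pow_ne_one hq1 le_rfl (by rw [pow_one, ← h])
      have : qNum q (k + 1) ≠ 0 := by
        refine div_ne_zero ?_ h1q
        exact sub_ne_zero.mpr fun h => aux_pow_ne_one hq1 (by omega) h.symm
      exact mul_ne_zero this ih

lemma aux_qShift_eq {q : ℂ} (hq1 : ‖q‖ < 1) (m : ℕ) :
    qShift q q m = qFact q m * (1 - q) ^ m := by
  have h1q : (1 : ℂ) - q ≠ 0 := by
    refine sub_ne_zero.mpr ?_
    intro h
    exact aux_pow_ne_one hq1 le_rfl (by rw [pow_one, ← h])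
  induction m with
  | zero => simp [qShift, qFact]
  | succ k ih =>
      rw [qShift, Finset.prod_range_succ, ← qShift, ih]
      show _ = qNum q (k + 1) * qFact q k * (1 - q) ^ (k + 1)
      rw [qNum]
      field_simp
      ring

lemma aux_qBinom_eq {q : ℂ} (hq1 : ‖q‖ < 1) {n k : ℕ} (hk : k ≤ n) :
    qBinom q n k = qFact q n / (qFact q (n - k) * qFact q k) := by
  have h1q : (1 : ℂ) - q ≠ 0 := by
    refine sub_ne_zero.mpr ?_
    intro h
    exact aux_pow_ne_one hq1 le_rfl (by rw [pow_one, ← h])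
  rw [qBinom, aux_qShift_eq hq1, aux_qShift_eq hq1, aux_qShift_eq hq1]
  have hp : (1 - q) ^ (n - k) * (1 - q) ^ k = (1 - q) ^ n := by
    rw [← pow_add, Nat.sub_add_cancel hk]
  rw [show qFact q (n - k) * (1 - q) ^ (n - k) * (qFact q k * (1 - q) ^ k)
      = qFact q (n - k) * qFact q k * ((1 - q) ^ (n - k) * (1 - q) ^ k) by ring, hp]
  rw [mul_comm (qFact q n) ((1 - q) ^ n), mul_comm (qFact q (n - k) * qFact q k) ((1 - q) ^ n)]
  rw [mul_div_mul_left _ _ (pow_ne_zero _ h1q)]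

/-- The `q`-binomial recurrence for the `q`-Bernoulli numbers `b_{n,q}`, which are defined by
`t/(𝓔_q(t)-1) = Σ_{n≥0} b_{n,q} t^n/[n]_q!`. -/
theorem qBernoulli_recurrence (q : ℂ) (hq0 : 0 < ‖q‖) (hq1 : ‖q‖ < 1)
    (b : ℕ → ℂ) (hb : qGen q b * (qExp q 1 - 1) = PowerSeries.X)
    (n : ℕ) (hn : 1 ≤ n) :
    (∑ k ∈ Finset.range (n + 1),
        qBinom q n k * (qShift (-1) q (n - k) / 2 ^ (n - k)) * b k) - b n
      = if n = 1 then 1 else 0 := by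
  have hF := aux_qFact_ne_zero hq1
  have h1q : (1 : ℂ) - q ≠ 0 := by
    refine sub_ne_zero.mpr ?_
    intro h
    exact aux_pow_ne_one hq1 le_rfl (by rw [pow_one, ← h])
  have h := congrArg (PowerSeries.coeff (R := ℂ) n) hb
  rw [mul_sub, mul_one, map_sub, PowerSeries.coeff_mul, PowerSeries.coeff_X] at h
  simp only [qGen, qExp, PowerSeries.coeff_mk, one_pow, mul_one] at h
  rw [Finset.Nat.sum_antidiagonal_eq_sum_range_succ_mk] at h
  simp only [mul_one] at h
  have hsum : ∀ k ∈ Finset.range (n + 1),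
      qBinom q n k * (qShift (-1) q (n - k) / 2 ^ (n - k)) * b k
        = qFact q n * (b k / qFact q k *
            (qShift (-1) q (n - k) / (2 ^ (n - k) * qFact q (n - k)))) := by
    intro k hk
    rw [aux_qBinom_eq hq1 (Finset.mem_range_succ_iff.mp hk)]
    have h2 : (2 : ℂ) ^ (n - k) ≠ 0 := pow_ne_zero _ two_ne_zero
    field_simp
  rw [Finset.sum_congr rfl hsum, ← Finset.mul_sum]
  have hbn : b n = qFact q n * (b n / qFact q n) := by
    rw [mul_comm, div_mul_cancel₀ _ (hF n)]
  rw [hbn, ← mul_sub, h]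
  by_cases h1 : n = 1
  · subst h1
    simp only [eq_self_iff_true, if_true, mul_one]
    show qNum q 1 * qFact q 0 = 1
    rw [qNum, qFact, pow_one, div_self h1q, one_mul]
  · simp [h1]
end

section
/- For every integer m ≥ 1, the q-Genocchi numbers satisfy Σ_{k=0}^{m} [m choose k]_q · ((−1;q)_{m−k}/2^{m−k}) · g_{k,q} + g_{m,q} = 2 if m = 1, and = 0 if m > 1. -/
open Finset PowerSeries

lemma one_sub_q_ne {q : ℂ} (hq1 : ‖q‖ < 1) : 1 - q ≠ 0 := by
  intro h
  have : q = 1 := by linear_combination -h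
  simp [this] at hq1

lemma one_sub_pow_ne {q : ℂ} (hq1 : ‖q‖ < 1) (n : ℕ) (hn : n ≠ 0) :
    1 - q ^ n ≠ 0 := by
  intro h
  have hq : q ^ n = 1 := by linear_combination -h
  have : ‖q ^ n‖ < 1 := by
    rw [norm_pow]
    exact pow_lt_one₀ (norm_nonneg q) hq1 hn
  rw [hq] at this; simp at this

lemma qFact_ne {q : ℂ} (hq1 : ‖q‖ < 1) (n : ℕ) : qFact q n ≠ 0 := by
  induction n with
  | zero => simp [qFact]
  | succ n ih =>
    simp only [qFact]
    exact mul_ne_zero (div_ne_zero (one_sub_pow_ne hq1 (n+1) (by omega)) (one_sub_q_ne hq1)) ih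

lemma qShift_qq {q : ℂ} (hq1 : ‖q‖ < 1) (n : ℕ) :
    qShift q q n = (1 - q) ^ n * qFact q n := by
  induction n with
  | zero => simp [qShift, qFact]
  | succ n ih =>
    rw [qShift, Finset.prod_range_succ, ← qShift, ih]
    simp only [qFact, qNum]
    field_simp [one_sub_q_ne hq1]
    ring

lemma qBinom_eq {q : ℂ} (hq1 : ‖q‖ < 1) {n k : ℕ} (hk : k ≤ n) :
    qBinom q n k = qFact q n / (qFact q k * qFact q (n - k)) := by
  rw [qBinom, qShift_qq hq1, qShift_qq hq1, qShift_qq hq1]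
  have h1 : (1 - q) ≠ 0 := one_sub_q_ne hq1
  have h2 : (1 - q) ^ (n - k) * (1 - q) ^ k = (1 - q) ^ n := by
    rw [← pow_add]; congr 1; omega
  field_simp [qFact_ne hq1]
  linear_combination -h2

/-- The recurrence for the `q`-Genocchi numbers `g_{n,q}`, which are defined by
`2t/(𝓔_q(t)+1) = Σ_{n≥0} g_{n,q} t^n/[n]_q!`. -/
theorem qGenocchi_recurrence (q : ℂ) (hq0 : 0 < ‖q‖) (hq1 : ‖q‖ < 1)
    (g : ℕ → ℂ) (hg : qGen q g * (qExp q 1 + 1) = 2 * PowerSeries.X)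
    (m : ℕ) (hm : 1 ≤ m) :
    (∑ k ∈ Finset.range (m + 1),
        qBinom q m k * (qShift (-1) q (m - k) / 2 ^ (m - k)) * g k) + g m
      = if m = 1 then 2 else 0 := by
  have hF := qFact_ne hq1
  -- extract coefficient m
  have h := congrArg (PowerSeries.coeff m) hg
  rw [PowerSeries.coeff_mul, Finset.Nat.sum_antidiagonal_eq_sum_range_succ_mk] at h
  have hrhs : (PowerSeries.coeff m) (2 * PowerSeries.X : PowerSeries ℂ) = if m = 1 then 2 else 0 := by
    rw [two_mul, map_add, PowerSeries.coeff_X]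
    split <;> norm_num
  rw [hrhs] at h
  have hterm : ∀ k ∈ Finset.range (m + 1),
      (PowerSeries.coeff k) (qGen q g) * (PowerSeries.coeff (m - k)) (qExp q 1 + 1)
      = g k / qFact q k * (qShift (-1) q (m - k) / (2 ^ (m - k) * qFact q (m - k)))
        + (if k = m then g k / qFact q k else 0) := by
    intro k hk
    rw [Finset.mem_range] at hk
    rw [map_add, qGen, qExp, PowerSeries.coeff_mk, PowerSeries.coeff_mk,
      PowerSeries.coeff_one, one_pow, mul_one]
    rw [mul_add, mul_ite, mul_one, mul_zero]
    congr 1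
    have : (m - k = 0) ↔ (k = m) := by omega
    simp [this]
  rw [Finset.sum_congr rfl hterm, Finset.sum_add_distrib,
    Finset.sum_ite_eq' (Finset.range (m + 1)) m (fun k => g k / qFact q k),
    if_pos (Finset.self_mem_range_succ m)] at h
  -- multiply through by qFact q m
  have h2 := congrArg (fun z => qFact q m * z) h
  simp only [mul_add, Finset.mul_sum] at h2
  have hL : ∀ k ∈ Finset.range (m + 1),
      qFact q m * (g k / qFact q k * (qShift (-1) q (m - k) / (2 ^ (m - k) * qFact q (m - k))))
      = qBinom q m k * (qShift (-1) q (m - k) / 2 ^ (m - k)) * g k := by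
    intro k hk
    rw [Finset.mem_range] at hk
    rw [qBinom_eq hq1 (by omega)]
    have h2k : (2 : ℂ) ^ (m - k) ≠ 0 := pow_ne_zero _ two_ne_zero
    field_simp [hF]
  rw [Finset.sum_congr rfl hL, mul_div_cancel₀ _ (hF m)] at h2
  rw [h2]
  by_cases hm1 : m = 1
  · subst hm1
    simp [qFact, qNum, one_sub_q_ne hq1]
  · simp [hm1]
end

section
/- For every integer n ≥ 1, the q-tangent numbers and q-Genocchi numbers are related by T_{2n+1,q} = (−1)^{n−1} · 2^{2n+1} · g_{2n+2,q} / [2n+2]_q. -/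
open Finset PowerSeries

/-- Relation between the `q`-tangent numbers `T_{2n+1,q}` (defined by
`tanh_q t = (𝓔_q(2t)-1)/(𝓔_q(2t)+1) = Σ_{n≥1} (-1)^n T_{2n+1,q} t^{2n+1}/[2n+1]_q!`)
and the `q`-Genocchi numbers `g_{n,q}` (defined by `2t/(𝓔_q(t)+1) = Σ g_{n,q} t^n/[n]_q!`). -/
theorem qTangent_eq_qGenocchi (q : ℂ) (hq0 : 0 < ‖q‖) (hq1 : ‖q‖ < 1)
    (g : ℕ → ℂ) (hg : qGen q g * (qExp q 1 + 1) = 2 * PowerSeries.X)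
    (tanhq : PowerSeries ℂ) (htanh : tanhq * (qExp q 2 + 1) = qExp q 2 - 1)
    (T : ℕ → ℂ)
    (hT : ∀ n : ℕ, 1 ≤ n →
      PowerSeries.coeff (2 * n + 1) tanhq = (-1) ^ n * T (2 * n + 1) / qFact q (2 * n + 1))
    (n : ℕ) (hn : 1 ≤ n) :
    T (2 * n + 1) = (-1) ^ (n - 1) * 2 ^ (2 * n + 1) * g (2 * n + 2) / qNum q (2 * n + 2) := by
  -- basic nonvanishing facts
  have hq : (1 : ℂ) - q ≠ 0 := by
    intro h
    rw [sub_eq_zero] at h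
    rw [← h] at hq1
    simp at hq1
  have hqNum : ∀ k : ℕ, 1 ≤ k → qNum q k ≠ 0 := by
    intro k hk
    have hqk : q ^ k ≠ 1 := by
      intro h
      have habs : ‖q‖ ^ k < 1 :=
        pow_lt_one₀ (norm_nonneg q) hq1 (by omega)
      rw [← norm_pow, h] at habs
      simp at habs
    exact div_ne_zero (sub_ne_zero.mpr (Ne.symm hqk)) hq
  have hFact : ∀ m : ℕ, qFact q m ≠ 0 := by
    intro m
    induction m with
    | zero => simp [qFact]
    | succ k ih => exact mul_ne_zero (hqNum (k + 1) (Nat.succ_le_succ (Nat.zero_le k))) ih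
  -- qExp q 2 is the rescale of qExp q 1 by 2
  have hresc : PowerSeries.rescale (2 : ℂ) (qExp q 1) = qExp q 2 := by
    ext m
    rw [PowerSeries.coeff_rescale]
    simp only [qExp, PowerSeries.coeff_mk]
    ring
  set A := qExp q 2 with hA
  have hA1 : A + 1 ≠ 0 := by
    intro h
    have h0 : PowerSeries.constantCoeff (A + 1) = 0 := by rw [h]; simp
    rw [map_add, map_one] at h0
    have hc : PowerSeries.constantCoeff A = 1 := by
      simp [hA, qExp, ← PowerSeries.coeff_zero_eq_constantCoeff, qShift, qFact]
    rw [hc] at h0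
    norm_num at h0
  -- rescale hg
  have hg2 : PowerSeries.rescale (2 : ℂ) (qGen q g) * (A + 1) = 4 * PowerSeries.X := by
    have h := congrArg (PowerSeries.rescale (2 : ℂ)) hg
    rw [map_mul, map_add, map_one, hresc, map_mul, PowerSeries.rescale_X,
      map_ofNat, map_ofNat] at h
    rw [h]; ring
  have h1 : (1 - tanhq) * (A + 1) = 2 := by linear_combination -htanh
  have hkey : 2 * PowerSeries.X * (1 - tanhq) = PowerSeries.rescale (2 : ℂ) (qGen q g) := by
    refine mul_right_cancel₀ hA1 ?_
    rw [hg2]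
    calc 2 * PowerSeries.X * (1 - tanhq) * (A + 1)
        = 2 * PowerSeries.X * ((1 - tanhq) * (A + 1)) := by ring
      _ = 2 * PowerSeries.X * 2 := by rw [h1]
      _ = 4 * PowerSeries.X := by ring
  -- take coefficient 2n+2
  have hcoeff := congrArg (PowerSeries.coeff (2 * n + 1 + 1)) hkey
  have hXmul : (2 : PowerSeries ℂ) * PowerSeries.X * (1 - tanhq) =
      PowerSeries.C (2 : ℂ) * (PowerSeries.X * (1 - tanhq)) := by
    rw [map_ofNat]; ring
  rw [PowerSeries.coeff_rescale, hXmul, PowerSeries.coeff_C_mul,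
    PowerSeries.coeff_succ_X_mul, map_sub, PowerSeries.coeff_one,
    if_neg (by omega : ¬ (2 * n + 1 = 0)), hT n hn] at hcoeff
  simp only [qGen, PowerSeries.coeff_mk] at hcoeff
  -- now pure algebra
  obtain ⟨m, rfl⟩ : ∃ m, n = m + 1 := ⟨n - 1, (Nat.succ_pred_eq_of_pos hn).symm⟩
  have hF2 : qFact q (2 * (m + 1) + 1 + 1) =
      qNum q (2 * (m + 1) + 1 + 1) * qFact q (2 * (m + 1) + 1) := by
    rw [qFact]
  have hF1 := hFact (2 * (m + 1) + 1)
  have hQ : qNum q (2 * (m + 1) + 2) ≠ 0 := hqNum (2 * (m + 1) + 2) (by omega)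
  rw [hF2] at hcoeff
  have heq : (2 * (m + 1) + 1 + 1) = 2 * (m + 1) + 2 := by ring
  rw [heq] at hcoeff
  have hsimp : (m + 1) - 1 = m := rfl
  rw [hsimp]
  have hm1 : ((-1 : ℂ)) ^ m * (-1) ^ m = 1 := by
    rw [← pow_add]
    exact Even.neg_one_pow ⟨m, rfl⟩
  rw [eq_div_iff hQ]
  field_simp [hF1] at hcoeff
  refine mul_left_cancel₀ hF1 ?_
  linear_combination (qFact q (2 * (m + 1) + 1) * (-1 : ℂ) ^ m / 2) * hcoeff -
    (T (2 * (m + 1) + 1) * qNum q (2 * (m + 1) + 2) * qFact q (2 * (m + 1) + 1)) * hm1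
end

section
/- (q-derivative formulas.) For every integer n ≥ 1 and all x ∈ ℂ, x ≠ 0: D_{q,x} B_{n,q}(x) = [n]_q (B_{n−1,q}(x) + B_{n−1,q}(qx))/2, D_{q,x} E_{n,q}(x) = [n]_q (E_{n−1,q}(x) + E_{n−1,q}(qx))/2, and D_{q,x} G_{n,q}(x) = [n]_q (G_{n−1,q}(x) + G_{n−1,q}(qx))/2. -/
open Finset PowerSeries

lemma qfact_ne (q : ℂ) (hq : ∀ m, 1 ≤ m → q ^ m ≠ 1) (n : ℕ) : qFact q n ≠ 0 := by
  induction n with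
  | zero => simp [qFact]
  | succ n ih =>
    have h1 : (1 : ℂ) - q ^ (n+1) ≠ 0 := sub_ne_zero.mpr fun h => hq (n+1) (by omega) h.symm
    have h2 : (1 : ℂ) - q ≠ 0 := sub_ne_zero.mpr fun h => hq 1 le_rfl (by simpa using h.symm)
    exact mul_ne_zero (div_ne_zero h1 h2) ih

lemma qExp_sub (q x : ℂ) (hq : ∀ m, 1 ≤ m → q ^ m ≠ 1) :
    qExp q x - qExp q (q * x)
      = PowerSeries.C ((1 - q) * x / 2) * (PowerSeries.X * (qExp q x + qExp q (q * x))) := by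
  ext n
  rw [map_sub, PowerSeries.coeff_C_mul]
  cases n with
  | zero => simp [qExp, qShift, qFact]
  | succ m =>
    rw [PowerSeries.coeff_succ_X_mul, map_add]
    simp only [qExp, PowerSeries.coeff_mk]
    have hS : qShift (-1) q (m+1) = qShift (-1) q m * (1 + q ^ m) := by
      simp [qShift, Finset.prod_range_succ]
    have hF : qFact q (m+1) = (1 - q^(m+1))/(1-q) * qFact q m := rfl
    have h1 : (1:ℂ) - q ^ (m+1) ≠ 0 := sub_ne_zero.mpr fun h => hq (m+1) (by omega) h.symm
    have h2 : (1:ℂ) - q ≠ 0 := sub_ne_zero.mpr fun h => hq 1 le_rfl (by simpa using h.symm)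
    have h3 : qFact q m ≠ 0 := qfact_ne q hq m
    have h4 : (2:ℂ) ^ m ≠ 0 := pow_ne_zero _ two_ne_zero
    rw [hS, hF]
    field_simp
    ring

lemma qDeriv_step (q x : ℂ) (P D : PowerSeries ℂ) (hD : D ≠ 0) (a b : ℕ → ℂ)
    (hq : ∀ m, 1 ≤ m → q ^ m ≠ 1)
    (ha : qGen q a * D = P * qExp q x) (hb : qGen q b * D = P * qExp q (q*x)) :
    qGen q a - qGen q b
      = PowerSeries.C ((1 - q) * x / 2) * (PowerSeries.X * (qGen q a + qGen q b)) := by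
  apply mul_right_cancel₀ hD
  calc (qGen q a - qGen q b) * D = P * (qExp q x - qExp q (q*x)) := by
        rw [sub_mul, ha, hb]; ring
    _ = P * (PowerSeries.C ((1-q)*x/2) * (PowerSeries.X * (qExp q x + qExp q (q*x)))) := by
        rw [qExp_sub q x hq]
    _ = PowerSeries.C ((1-q)*x/2) * (PowerSeries.X * (P * qExp q x + P * qExp q (q*x))) := by
        ring
    _ = PowerSeries.C ((1-q)*x/2) * (PowerSeries.X * (qGen q a * D + qGen q b * D)) := by
        rw [ha, hb]
    _ = (PowerSeries.C ((1-q)*x/2) * (PowerSeries.X * (qGen q a + qGen q b))) * D := by ring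

lemma qDeriv_extract (q x : ℂ) (hq : ∀ m, 1 ≤ m → q ^ m ≠ 1) (hx : x ≠ 0) (a b : ℕ → ℂ)
    (h : qGen q a - qGen q b
      = PowerSeries.C ((1 - q) * x / 2) * (PowerSeries.X * (qGen q a + qGen q b)))
    (n : ℕ) (hn : 1 ≤ n) :
    (a n - b n)/((1-q)*x) = qNum q n * (a (n-1) + b (n-1)) / 2 := by
  obtain ⟨m, rfl⟩ : ∃ m, n = m + 1 := ⟨n - 1, by omega⟩
  have hc := congrArg (PowerSeries.coeff (m+1)) h
  rw [map_sub, PowerSeries.coeff_C_mul, PowerSeries.coeff_succ_X_mul, map_add] at hc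
  simp only [qGen, PowerSeries.coeff_mk] at hc
  have h1 : (1:ℂ) - q ^ (m+1) ≠ 0 := sub_ne_zero.mpr fun h => hq (m+1) (by omega) h.symm
  have h2 : (1:ℂ) - q ≠ 0 := sub_ne_zero.mpr fun h => hq 1 le_rfl (by simpa using h.symm)
  have hN : qNum q (m+1) ≠ 0 := div_ne_zero h1 h2
  have hFm : qFact q m ≠ 0 := qfact_ne q hq m
  have hF : qFact q (m+1) = qNum q (m+1) * qFact q m := rfl
  simp only [Nat.add_sub_cancel]
  rw [hF] at hc
  field_simp at hc
  have hc2 : (a (m+1) - b (m+1)) * 2 = (1-q)*x*(a m + b m)*qNum q (m+1) :=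
    mul_right_cancel₀ hFm (by linear_combination qFact q m * hc)
  rw [div_eq_iff (mul_ne_zero h2 hx)]
  linear_combination hc2 / 2

/-- `q`-derivative formulas for the `q`-Bernoulli, `q`-Euler and `q`-Genocchi polynomials
(`B_{n,q}(x) := B_{n,q}(x,0)` etc.), where the `q`-derivative of `f` is
`D_{q,x} f(x) = (f(x) - f(qx))/((1-q)x)`. -/
theorem qDerivative_formulas (q : ℂ) (hq0 : 0 < ‖q‖) (hq1 : ‖q‖ < 1)
    (B E G : ℂ → ℂ → ℕ → ℂ)
    (hB : ∀ x y : ℂ, qGen q (B x y) * (qExp q 1 - 1) = PowerSeries.X * qExp q x * qExp q y)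
    (hE : ∀ x y : ℂ, qGen q (E x y) * (qExp q 1 + 1) = 2 * qExp q x * qExp q y)
    (hG : ∀ x y : ℂ, qGen q (G x y) * (qExp q 1 + 1) = 2 * PowerSeries.X * qExp q x * qExp q y)
    (n : ℕ) (hn : 1 ≤ n) (x : ℂ) (hx : x ≠ 0) :
    (B x 0 n - B (q * x) 0 n) / ((1 - q) * x)
        = qNum q n * (B x 0 (n - 1) + B (q * x) 0 (n - 1)) / 2 ∧
    (E x 0 n - E (q * x) 0 n) / ((1 - q) * x)
        = qNum q n * (E x 0 (n - 1) + E (q * x) 0 (n - 1)) / 2 ∧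
    (G x 0 n - G (q * x) 0 n) / ((1 - q) * x)
        = qNum q n * (G x 0 (n - 1) + G (q * x) 0 (n - 1)) / 2 := by
  have hqm : ∀ m, 1 ≤ m → q ^ m ≠ 1 := by
    intro m hm h
    have h1 : ‖q ^ m‖ = 1 := by rw [h]; simp
    rw [norm_pow] at h1
    have h2 : ‖q‖ ^ m < 1 :=
      pow_lt_one₀ (norm_nonneg q) hq1 (by omega)
    rw [h1] at h2
    exact lt_irrefl _ h2
  have h2 : (1:ℂ) - q ≠ 0 := sub_ne_zero.mpr fun h => hqm 1 le_rfl (by simpa using h.symm)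
  have hcB : PowerSeries.coeff 1 (qExp q 1 - 1) = 1 := by
    rw [map_sub]
    simp [qExp, qShift, qFact, qNum, div_self h2, PowerSeries.coeff_one]
  have hDB : qExp q 1 - 1 ≠ 0 := by
    intro h; rw [h, map_zero] at hcB; exact one_ne_zero hcB.symm
  have hcE : PowerSeries.coeff 0 (qExp q 1 + 1) = 2 := by
    rw [map_add]
    simp [qExp, qShift, qFact]
    norm_num
  have hDE : qExp q 1 + 1 ≠ 0 := by
    intro h; rw [h, map_zero] at hcE; exact two_ne_zero hcE.symm
  have keyB := qDeriv_step q x (PowerSeries.X * qExp q 0) _ hDB (B x 0) (B (q*x) 0) hqm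
    ((hB x 0).trans (by ring)) ((hB (q*x) 0).trans (by ring))
  have keyE := qDeriv_step q x (2 * qExp q 0) _ hDE (E x 0) (E (q*x) 0) hqm
    ((hE x 0).trans (by ring)) ((hE (q*x) 0).trans (by ring))
  have keyG := qDeriv_step q x (2 * PowerSeries.X * qExp q 0) _ hDE (G x 0) (G (q*x) 0) hqm
    ((hG x 0).trans (by ring)) ((hG (q*x) 0).trans (by ring))
  exact ⟨qDeriv_extract q x hqm hx _ _ keyB n hn,
         qDeriv_extract q x hqm hx _ _ keyE n hn,
         qDeriv_extract q x hqm hx _ _ keyG n hn⟩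
end

section
/- (Difference equation for q-Bernoulli polynomials.) For every integer n ≥ 1 and all x ∈ ℂ: B_{n,q}(x,1) − B_{n,q}(x) = ((−1;q)_{n−1}/2^{n−1}) [n]_q x^{n−1}. -/
open Finset PowerSeries

lemma qExp_zero (q : ℂ) : qExp q 0 = 1 := by
  ext n
  cases n with
  | zero => simp [qExp, qShift, qFact]
  | succ m => simp [qExp]

lemma qNum_ne_zero (q : ℂ) (hq1 : ‖q‖ < 1) (n : ℕ) (hn : 1 ≤ n) :
    qNum q n ≠ 0 := by
  have hq : q ≠ 1 := by intro h; simp [h] at hq1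
  have hqn : q ^ n ≠ 1 := by
    intro h
    have : ‖q ^ n‖ = 1 := by rw [h]; simp
    rw [norm_pow] at this
    have : ‖q‖ ^ n < 1 ^ n := by
      apply pow_lt_pow_left₀ hq1 (norm_nonneg q)
      omega
    simp_all
  simp only [qNum, div_ne_zero_iff, sub_ne_zero]
  exact ⟨fun h => hqn h.symm, fun h => hq h.symm⟩

lemma qFact_ne_zero (q : ℂ) (hq1 : ‖q‖ < 1) (n : ℕ) : qFact q n ≠ 0 := by
  induction n with
  | zero => simp [qFact]
  | succ m ih =>
      simp only [qFact]
      exact mul_ne_zero (qNum_ne_zero q hq1 (m + 1) (by omega)) ih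

/-- Difference equation for the `q`-Bernoulli polynomials:
`B_{n,q}(x,1) - B_{n,q}(x) = ((-1;q)_{n-1}/2^{n-1}) [n]_q x^{n-1}` for `n ≥ 1`. -/
theorem qBernoulli_difference (q : ℂ) (hq0 : 0 < ‖q‖) (hq1 : ‖q‖ < 1)
    (B : ℂ → ℂ → ℕ → ℂ)
    (hB : ∀ x y : ℂ, qGen q (B x y) * (qExp q 1 - 1) = PowerSeries.X * qExp q x * qExp q y)
    (n : ℕ) (hn : 1 ≤ n) (x : ℂ) :
    B x 1 n - B x 0 n = qShift (-1) q (n - 1) / 2 ^ (n - 1) * qNum q n * x ^ (n - 1) := by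
  have hq : q ≠ 1 := by intro h; simp [h] at hq1
  have hE : qExp q 1 - 1 ≠ 0 := by
    intro h
    have := congrArg (PowerSeries.coeff 1) h
    simp [qExp, qFact, qShift, qNum, div_self (sub_ne_zero.mpr (Ne.symm hq))] at this
  have key : qGen q (B x 1) - qGen q (B x 0) = PowerSeries.X * qExp q x := by
    apply mul_right_cancel₀ hE
    rw [sub_mul, hB x 1, hB x 0, qExp_zero, mul_sub, mul_one]
  obtain ⟨m, rfl⟩ : ∃ m, n = m + 1 := ⟨n - 1, by omega⟩
  have hco := congrArg (PowerSeries.coeff (m + 1)) key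
  rw [map_sub, PowerSeries.coeff_succ_X_mul] at hco
  simp only [qGen, qExp, PowerSeries.coeff_mk] at hco
  have hFm := qFact_ne_zero q hq1 m
  have hFm1 := qFact_ne_zero q hq1 (m + 1)
  have hfact : qFact q (m + 1) = qNum q (m + 1) * qFact q m := rfl
  rw [div_sub_div_same,
    div_eq_div_iff hFm1 (mul_ne_zero (pow_ne_zero m two_ne_zero) hFm)] at hco
  have h2 : (B x 1 (m + 1) - B x 0 (m + 1)) * 2 ^ m =
      qShift (-1) q m * x ^ m * qNum q (m + 1) :=
    mul_right_cancel₀ hFm (by rw [hfact] at hco; linear_combination hco)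
  simp only [Nat.add_sub_cancel]
  field_simp
  linear_combination h2
end
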